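/- Under P(R=1|Y,Ŷ,X) = π₀(X) with target parameter in the combined population: the difference between the efficiency bounds without and with predictions equals Γ·E[((1−π₀(X))/π₀(X))·(h̃₀(X,Ŷ) − h₀(X))⊗²]·Γ, which is positive semidefinite; here V_wo = E[(R/π₀(X)²)(u − h̃₀)⊗²] + E[(R/π₀(X)²)(h̃₀ − h₀)⊗²] + E[h₀⊗²] and V_w = E[(R/π₀(X)²)(u − h̃₀)⊗²] + E[(h̃₀ − h₀)⊗²] + E[h₀⊗²]. -/

import Mathlib

open MeasureTheory

theorem stmt_14 {Ω : Type*} [MeasurableSpace Ω] (μ : Measure Ω) [IsProbabilityMeasure μ]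
    {d : ℕ} (R Y X Yh : Ω → ℝ)
    (hR : Measurable R) (hY : Measurable Y) (hX : Measurable X) (hYh : Measurable Yh)
    (hRbin : ∀ ω, R ω = 0 ∨ R ω = 1)
    (p0 : ℝ → ℝ) (hp0 : Measurable p0) (hp0mem : ∀ x, p0 x ∈ Set.Ioo (0:ℝ) 1)
    (hMAR : μ[R | MeasurableSpace.comap (fun ω => (Y ω, Yh ω, X ω)) inferInstance]
      =ᵐ[μ] fun ω => p0 (X ω))
    (u0 : ℝ → ℝ → Fin d → ℝ) (hu0 : Measurable (Function.uncurry u0))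
    (u ht h0 : Ω → Fin d → ℝ) (hu : u = fun ω => u0 (Y ω) (X ω))
    (huL2 : MemLp u 2 μ)
    (hht : ht =ᵐ[μ] μ[u | MeasurableSpace.comap (fun ω => (X ω, Yh ω)) inferInstance])
    (hh0 : h0 =ᵐ[μ] μ[u | MeasurableSpace.comap X inferInstance])
    (hI1 : ∀ i j, Integrable
      (fun ω => (R ω / (p0 (X ω))^2) * ((u ω i - ht ω i) * (u ω j - ht ω j))) μ)
    (hI2 : ∀ i j, Integrable
      (fun ω => (R ω / (p0 (X ω))^2) * ((ht ω i - h0 ω i) * (ht ω j - h0 ω j))) μ)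
    (hI3 : ∀ i j, Integrable (fun ω => (ht ω i - h0 ω i) * (ht ω j - h0 ω j)) μ)
    (hI4 : ∀ i j, Integrable (fun ω => h0 ω i * h0 ω j) μ)
    (hI5 : ∀ i j, Integrable
      (fun ω => ((1 - p0 (X ω)) / p0 (X ω)) * ((ht ω i - h0 ω i) * (ht ω j - h0 ω j))) μ)
    (Γ : Matrix (Fin d) (Fin d) ℝ) (hΓsymm : Γ.IsSymm) (hΓinv : IsUnit Γ.det) :
    (Γ * (Matrix.of fun i j =>
        (∫ ω, (R ω / (p0 (X ω))^2) * ((u ω i - ht ω i) * (u ω j - ht ω j)) ∂μ)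
        + (∫ ω, (R ω / (p0 (X ω))^2) * ((ht ω i - h0 ω i) * (ht ω j - h0 ω j)) ∂μ)
        + (∫ ω, h0 ω i * h0 ω j ∂μ)) * Γ
      - Γ * (Matrix.of fun i j =>
        (∫ ω, (R ω / (p0 (X ω))^2) * ((u ω i - ht ω i) * (u ω j - ht ω j)) ∂μ)
        + (∫ ω, (ht ω i - h0 ω i) * (ht ω j - h0 ω j) ∂μ)
        + (∫ ω, h0 ω i * h0 ω j ∂μ)) * Γ
      = Γ * (Matrix.of fun i j =>
        ∫ ω, ((1 - p0 (X ω)) / p0 (X ω)) * ((ht ω i - h0 ω i) * (ht ω j - h0 ω j)) ∂μ) * Γ)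
    ∧ Matrix.PosSemidef (Γ * (Matrix.of fun i j =>
        ∫ ω, ((1 - p0 (X ω)) / p0 (X ω)) * ((ht ω i - h0 ω i) * (ht ω j - h0 ω j)) ∂μ) * Γ) := by
  have hπpos : ∀ x, 0 < p0 x := fun x => (hp0mem x).1
  have hπle : ∀ x, p0 x ≤ 1 := fun x => (hp0mem x).2.le
  have hπne : ∀ x, p0 x ≠ 0 := fun x => (hπpos x).ne'
  have hm : MeasurableSpace.comap (fun ω => (Y ω, Yh ω, X ω)) inferInstance
      ≤ ‹MeasurableSpace Ω› := (hY.prodMk (hYh.prodMk hX)).comap_le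
  set m : MeasurableSpace Ω := MeasurableSpace.comap (fun ω => (Y ω, Yh ω, X ω)) inferInstance
    with hm_def
  set m2 : MeasurableSpace Ω := MeasurableSpace.comap (fun ω => (X ω, Yh ω)) inferInstance
    with hm2_def
  set m1 : MeasurableSpace Ω := MeasurableSpace.comap X inferInstance with hm1_def
  have h2m : m2 ≤ m := by
    have h : (fun ω => (X ω, Yh ω))
        = (fun p : ℝ × ℝ × ℝ => (p.2.2, p.2.1)) ∘ (fun ω => (Y ω, Yh ω, X ω)) := rfl
    rw [hm2_def, h, ← MeasurableSpace.comap_comp]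
    exact MeasurableSpace.comap_mono (measurable_snd.snd.prodMk measurable_snd.fst).comap_le
  have h1m : m1 ≤ m := by
    have h : X = (fun p : ℝ × ℝ × ℝ => p.2.2) ∘ (fun ω => (Y ω, Yh ω, X ω)) := rfl
    rw [hm1_def, h, ← MeasurableSpace.comap_comp]
    exact MeasurableSpace.comap_mono measurable_snd.snd.comap_le
  set F : Ω → Fin d → ℝ := μ[u | m2] with hF_def
  set H : Ω → Fin d → ℝ := μ[u | m1] with hH_def
  have hFsm : StronglyMeasurable[m2] F := stronglyMeasurable_condExp
  have hHsm : StronglyMeasurable[m1] H := stronglyMeasurable_condExp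
  have hgm : ∀ i, Measurable[m] fun ω => F ω i - H ω i := by
    intro i
    exact ((((continuous_apply i).comp_stronglyMeasurable hFsm).mono h2m).sub
      (((continuous_apply i).comp_stronglyMeasurable hHsm).mono h1m)).measurable
  have hXm : Measurable[m] fun ω => p0 (X ω) := by
    have hXm1 : Measurable[m1] X := Measurable.of_comap_le le_rfl
    exact (hp0.comp hXm1).mono h1m le_rfl
  have hRint : Integrable R μ := by
    refine (integrable_const (1 : ℝ)).mono' hR.aestronglyMeasurable ?_
    filter_upwards with ω
    rcases hRbin ω with h | h <;> simp [h]
  have key : ∀ w : Ω → ℝ, StronglyMeasurable[m] w → Integrable (fun ω => w ω * R ω) μ →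
      ∫ ω, w ω * R ω ∂μ = ∫ ω, w ω * p0 (X ω) ∂μ := by
    intro w hw hint
    haveI : SigmaFinite (μ.trim hm) := inferInstance
    have h1 : ∫ ω, (w * R) ω ∂μ = ∫ ω, (μ[w * R | m]) ω ∂μ := (integral_condExp hm).symm
    have h2 : μ[w * R | m] =ᵐ[μ] fun ω => w ω * p0 (X ω) := by
      refine (condExp_mul_of_stronglyMeasurable_left hw hint hRint).trans ?_
      filter_upwards [hMAR] with ω hω
      simp only [Pi.mul_apply, hω]
    have h1' : ∫ ω, w ω * R ω ∂μ = ∫ ω, (w * R) ω ∂μ := rfl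
    rw [h1', h1, integral_congr_ae h2]
  have hco : ∀ i, (fun ω => ht ω i - h0 ω i) =ᵐ[μ] fun ω => F ω i - H ω i := by
    intro i
    filter_upwards [hht, hh0] with ω h1 h2
    rw [h1, h2]
  have main : ∀ i j,
      (∫ ω, (R ω / (p0 (X ω))^2) * ((ht ω i - h0 ω i) * (ht ω j - h0 ω j)) ∂μ)
        - (∫ ω, (ht ω i - h0 ω i) * (ht ω j - h0 ω j) ∂μ)
      = ∫ ω, ((1 - p0 (X ω)) / p0 (X ω)) * ((ht ω i - h0 ω i) * (ht ω j - h0 ω j)) ∂μ := by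
    intro i j
    set w : Ω → ℝ := fun ω => ((F ω i - H ω i) * (F ω j - H ω j)) / (p0 (X ω))^2 with hw_def
    have hwm : StronglyMeasurable[m] w :=
      (((hgm i).mul (hgm j)).div (hXm.pow_const 2)).stronglyMeasurable
    have haeW : (fun ω => (R ω / (p0 (X ω))^2) * ((ht ω i - h0 ω i) * (ht ω j - h0 ω j)))
        =ᵐ[μ] fun ω => w ω * R ω := by
      filter_upwards [hco i, hco j] with ω h1 h2
      rw [hw_def]
      simp only [← h1, ← h2]
      ring
    have hintWR : Integrable (fun ω => w ω * R ω) μ := (hI2 i j).congr haeW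
    have h1 : ∫ ω, (R ω / (p0 (X ω))^2) * ((ht ω i - h0 ω i) * (ht ω j - h0 ω j)) ∂μ
        = ∫ ω, w ω * p0 (X ω) ∂μ := by
      rw [integral_congr_ae haeW]; exact key w hwm hintWR
    have haeP : (fun ω => w ω * p0 (X ω)) =ᵐ[μ]
        fun ω => ((1 - p0 (X ω)) / p0 (X ω)) * ((ht ω i - h0 ω i) * (ht ω j - h0 ω j))
          + (ht ω i - h0 ω i) * (ht ω j - h0 ω j) := by
      filter_upwards [hco i, hco j] with ω h1 h2
      rw [hw_def]
      simp only [← h1, ← h2]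
      have := hπne (X ω)
      field_simp
      ring
    rw [h1, integral_congr_ae haeP, integral_add (hI5 i j) (hI3 i j)]
    ring
  set M : Matrix (Fin d) (Fin d) ℝ := Matrix.of fun i j =>
    ∫ ω, ((1 - p0 (X ω)) / p0 (X ω)) * ((ht ω i - h0 ω i) * (ht ω j - h0 ω j)) ∂μ with hM_def
  have hMps : M.PosSemidef := by
    constructor
    · ext i j
      simp only [Matrix.conjTranspose_apply, hM_def, Matrix.of_apply, star_trivial]
      congr 1
      ext ω
      ring
    · intro x
      have hIij : ∀ i j : Fin d, Integrable
          (fun ω => x i * x j *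
            (((1 - p0 (X ω)) / p0 (X ω)) * ((ht ω i - h0 ω i) * (ht ω j - h0 ω j)))) μ :=
        fun i j => (hI5 i j).const_mul (x i * x j)
      have hInt : ∫ ω, ((1 - p0 (X ω)) / p0 (X ω)) * (∑ i, x i * (ht ω i - h0 ω i))^2 ∂μ
          = ∑ i, ∑ j, x i * x j * (M i j) := by
        have hpt : ∀ ω, ((1 - p0 (X ω)) / p0 (X ω)) * (∑ i, x i * (ht ω i - h0 ω i))^2
            = ∑ i, ∑ j, x i * x j *
              (((1 - p0 (X ω)) / p0 (X ω)) * ((ht ω i - h0 ω i) * (ht ω j - h0 ω j))) := by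
          intro ω
          rw [sq, Finset.sum_mul_sum, Finset.mul_sum]
          refine Finset.sum_congr rfl fun i _ => ?_
          rw [Finset.mul_sum]
          refine Finset.sum_congr rfl fun j _ => ?_
          ring
        simp_rw [hpt]
        rw [integral_finset_sum _ fun i _ => integrable_finset_sum _ fun j _ => hIij i j]
        refine Finset.sum_congr rfl fun i _ => ?_
        rw [integral_finset_sum _ fun j _ => hIij i j]
        refine Finset.sum_congr rfl fun j _ => ?_
        rw [integral_const_mul]
        rfl
      have hnn : 0 ≤ ∫ ω, ((1 - p0 (X ω)) / p0 (X ω)) * (∑ i, x i * (ht ω i - h0 ω i))^2 ∂μ := by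
        refine integral_nonneg fun ω => ?_
        have h1 : 0 ≤ (1 - p0 (X ω)) / p0 (X ω) :=
          div_nonneg (by linarith [hπle (X ω)]) (hπpos (X ω)).le
        positivity
      have hdot : dotProduct (star x) (M.mulVec x) = ∑ i, ∑ j, x i * x j * (M i j) := by
        simp only [dotProduct, Matrix.mulVec, Pi.star_apply,
          star_trivial, Finset.mul_sum]
        refine Finset.sum_congr rfl fun i _ => Finset.sum_congr rfl fun j _ => by ring
      have hfs : (x.sum fun i xi => x.sum fun j xj => star xi * M i j * xj)
          = ∑ i, ∑ j, x i * x j * M i j := by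
        rw [Finsupp.sum_fintype _ _ (by simp)]
        refine Finset.sum_congr rfl fun i _ => ?_
        rw [Finsupp.sum_fintype _ _ (by simp)]
        refine Finset.sum_congr rfl fun j _ => ?_
        simp only [star_trivial]
        ring
      rw [hfs, ← hInt]
      exact hnn
  have hΓH : Γ.conjTranspose = Γ := by
    ext i j
    simp only [Matrix.conjTranspose_apply, star_trivial]
    exact congrFun (congrFun hΓsymm i) j
  constructor
  · rw [← Matrix.sub_mul, ← Matrix.mul_sub]
    congr 2
    ext i j
    simp only [hM_def, Matrix.sub_apply, Matrix.of_apply]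
    linarith [main i j]
  · have := hMps.mul_mul_conjTranspose_same Γ
    rwa [hΓH] at this
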